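/- arXiv:1501.03640 — 7 statements merged into one kernel-verified Lean document; each statement's English description precedes it below -/
import Mathlib

section
/- Let E ⊆ [0,∞) contain 0 and let r̃ = (r_n) be a normalizing sequence. Define Ω̄^E_{0,r̃} = { t ∈ [0,∞) : there exists a sequence (x_n) in E with x_n → 0 and t = lim_n x_n/r_n }. Then Ω̄^E_{0,r̃} is a closed subset of [0,∞); equivalently, every pretangent space Ω^E_{0,r̃} is a complete metric space. -/
open Filter Topology

/-- `Omega E r` is the set `Ω̄^E_{0,r̃}` of all limits `lim xₙ / rₙ` over sequences `(xₙ)`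
in `E` tending to `0` for which this limit exists. -/
def Omega (E : Set ℝ) (r : ℕ → ℝ) : Set ℝ :=
  {t : ℝ | ∃ x : ℕ → ℝ, (∀ n, x n ∈ E) ∧ Tendsto x atTop (nhds 0) ∧
    Tendsto (fun n => x n / r n) atTop (nhds t)}

theorem Omega_isClosed
    (E : Set ℝ) (hE : E ⊆ Set.Ici 0) (h0E : (0 : ℝ) ∈ E)
    (r : ℕ → ℝ) (hrpos : ∀ n, 0 < r n) (hr0 : Tendsto r atTop (nhds 0)) :
    IsClosed (Omega E r) := by
  rw [← isSeqClosed_iff_isClosed]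
  intro ts t hts htlim
  choose x hxE hx0 hxlim using hts
  have hN : ∀ k : ℕ, ∃ N : ℕ, ∀ n ≥ N,
      |x k n| < 1 / (k + 1) ∧ |x k n / r n - ts k| < 1 / (k + 1) := by
    intro k
    have hp : (0 : ℝ) < 1 / (k + 1) := by positivity
    have h1 : ∀ᶠ n in atTop, |x k n| < 1 / (k + 1) := by
      have := Metric.tendsto_atTop.mp (hx0 k) _ hp
      obtain ⟨N, hNn⟩ := this
      exact Filter.eventually_atTop.mpr ⟨N, fun n hn => by
        simpa [Real.dist_eq] using hNn n hn⟩
    have h2 : ∀ᶠ n in atTop, |x k n / r n - ts k| < 1 / (k + 1) := by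
      have := Metric.tendsto_atTop.mp (hxlim k) _ hp
      obtain ⟨N, hNn⟩ := this
      exact Filter.eventually_atTop.mpr ⟨N, fun n hn => by
        simpa [Real.dist_eq] using hNn n hn⟩
    obtain ⟨N, hNboth⟩ := Filter.eventually_atTop.mp (h1.and h2)
    exact ⟨N, hNboth⟩
  choose N hNspec using hN
  set M : ℕ → ℕ := fun k => k + (Finset.range (k + 1)).sum N with hM
  have hMmono : StrictMono M := by
    apply strictMono_nat_of_lt_succ
    intro k
    have hsum : (Finset.range (k + 1)).sum N ≤ (Finset.range (k + 1 + 1)).sum N :=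
      Finset.sum_le_sum_of_subset (by
        intro i hi
        simp only [Finset.mem_range] at hi ⊢
        omega)
    simp only [hM]
    omega
  have hNM : ∀ k, N k ≤ M k := by
    intro k
    have : N k ≤ (Finset.range (k + 1)).sum N :=
      Finset.single_le_sum (f := N) (fun i _ => Nat.zero_le _)
        (Finset.mem_range.mpr (Nat.lt_succ_self k))
    simp only [hM]
    omega
  set K : ℕ → ℕ := fun n => Nat.findGreatest (fun k => M k ≤ n) n with hKdef
  have hKge : ∀ k n, M k ≤ n → k ≤ K n := fun k n h =>
    Nat.le_findGreatest (le_trans (hMmono.le_apply) h) h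
  have hKtop : Tendsto K atTop atTop :=
    tendsto_atTop_atTop.mpr fun b => ⟨M b, fun n h => hKge b n h⟩
  have hMK : ∀ n, M 0 ≤ n → M (K n) ≤ n := by
    intro n hn
    exact Nat.findGreatest_spec (P := fun k => M k ≤ n) (m := 0) (Nat.zero_le n) hn
  set y : ℕ → ℝ := fun n => x (K n) n with hy
  have key : ∀ n, M 0 ≤ n →
      |y n| < 1 / (K n + 1) ∧ |y n / r n - ts (K n)| < 1 / (K n + 1) := by
    intro n hn
    exact hNspec (K n) n (le_trans (hNM (K n)) (hMK n hn))
  have hbound : Tendsto (fun n => 1 / ((K n : ℝ) + 1)) atTop (𝓝 0) :=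
    tendsto_one_div_add_atTop_nhds_zero_nat.comp hKtop
  refine ⟨y, fun n => hxE (K n) n, ?_, ?_⟩
  · apply squeeze_zero_norm' ?_ hbound
    filter_upwards [Filter.eventually_atTop.mpr ⟨M 0, fun n hn => (key n hn).1⟩] with n h
    exact le_of_lt h
  · have hdiff : Tendsto (fun n => y n / r n - ts (K n)) atTop (𝓝 0) := by
      apply squeeze_zero_norm' ?_ hbound
      filter_upwards [Filter.eventually_atTop.mpr ⟨M 0, fun n hn => (key n hn).2⟩] with n h
      exact le_of_lt h
    have := hdiff.add (htlim.comp hKtop)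
    simpa using this
end

section
/- Let E, T ⊆ [0,∞) with 0 ∈ E ∩ T and let r̃ be a normalizing sequence. Write E ⪯ T if for every sequence (e_n) in E \ {0} with e_n → 0 there exists a sequence (t_n) in T \ {0} with lim_n e_n/t_n = 1. If E ⪯ T and T ⪯ E, then Ω̄^E_{0,r̃} = Ω̄^T_{0,r̃}. -/
open Filter Topology

/-- `E ⪯ T` : for every sequence in `E \ {0}` tending to `0` there is a sequence in
`T \ {0}` with ratio tending to `1`. -/
def Prec (E T : Set ℝ) : Prop :=
  ∀ e : ℕ → ℝ, (∀ n, e n ∈ E \ {0}) → Tendsto e atTop (nhds 0) →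
    ∃ t : ℕ → ℝ, (∀ n, t n ∈ T \ {0}) ∧ Tendsto (fun n => e n / t n) atTop (nhds 1)

theorem Omega_subset_of_prec
    (E T : Set ℝ) (hE : E ⊆ Set.Ici 0)
    (h0T : (0 : ℝ) ∈ T)
    (r : ℕ → ℝ) (hrpos : ∀ n, 0 < r n)
    (hET : Prec E T) :
    Omega E r ⊆ Omega T r := by
  rintro t ⟨x, hxE, hx0, hxr⟩
  rcases eq_or_ne t 0 with rfl | ht
  · exact ⟨fun _ => 0, fun _ => h0T, tendsto_const_nhds, by
      simpa using (tendsto_const_nhds : Tendsto (fun _ : ℕ => (0:ℝ)) atTop (nhds 0))⟩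
  · have htnn : 0 ≤ t := by
      refine ge_of_tendsto' hxr fun n => ?_
      exact div_nonneg (hE (hxE n)) (hrpos n).le
    have htpos : 0 < t := lt_of_le_of_ne htnn (Ne.symm ht)
    have hev : ∀ᶠ n in atTop, 0 < x n / r n :=
      hxr.eventually (eventually_gt_nhds htpos)
    obtain ⟨N, hN⟩ := eventually_atTop.1 hev
    have hxne : ∀ n ≥ N, x n ≠ 0 := by
      intro n hn h0
      have := hN n hn
      rw [h0, zero_div] at this
      exact lt_irrefl _ this
    set e : ℕ → ℝ := fun n => x (n + N) with he
    have heE : ∀ n, e n ∈ E \ {0} :=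
      fun n => ⟨hxE _, hxne _ (Nat.le_add_left N n)⟩
    have he0 : Tendsto e atTop (nhds 0) :=
      hx0.comp (tendsto_add_atTop_nat N)
    obtain ⟨y, hyT, hry⟩ := hET e heE he0
    have hyne : ∀ n, y n ≠ 0 := fun n => (hyT n).2
    have hy0 : Tendsto y atTop (nhds 0) := by
      have h := he0.div hry one_ne_zero
      simp only [zero_div] at h
      refine h.congr fun n => ?_
      rw [Pi.div_apply, div_div_eq_mul_div, mul_comm, mul_div_assoc,
        div_self ((heE n).2), mul_one]
    refine ⟨fun n => if N ≤ n then y (n - N) else 0, fun n => ?_, ?_, ?_⟩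
    · by_cases h : N ≤ n <;> simp [h, (hyT _).1, h0T]
    · have h1 : Tendsto (fun n => y (n - N)) atTop (nhds 0) :=
        hy0.comp (tendsto_sub_atTop_nat N)
      refine h1.congr' ?_
      filter_upwards [eventually_ge_atTop N] with n hn
      simp [hn]
    · have key : Tendsto (fun n => (e (n - N) / y (n - N))⁻¹ * (x n / r n))
          atTop (nhds (1⁻¹ * t)) := by
        exact ((hry.comp (tendsto_sub_atTop_nat N)).inv₀ one_ne_zero).mul hxr
      rw [inv_one, one_mul] at key
      refine key.congr' ?_
      filter_upwards [eventually_ge_atTop N] with n hn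
      have hxn : e (n - N) = x n := by
        simp [he, Nat.sub_add_cancel hn]
      simp only [hn, if_pos, hxn]
      rw [inv_div, div_mul_div_comm, mul_comm (y (n - N)) (x n),
        mul_div_mul_left _ _ (hxne n hn)]

theorem Omega_eq_of_prec
    (E T : Set ℝ) (hE : E ⊆ Set.Ici 0) (hT : T ⊆ Set.Ici 0)
    (h0E : (0 : ℝ) ∈ E) (h0T : (0 : ℝ) ∈ T)
    (r : ℕ → ℝ) (hrpos : ∀ n, 0 < r n) (hr0 : Tendsto r atTop (nhds 0))
    (hET : Prec E T) (hTE : Prec T E) :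
    Omega E r = Omega T r := by
  exact Set.Subset.antisymm
    (Omega_subset_of_prec E T hE h0T r hrpos hET)
    (Omega_subset_of_prec T E hT h0E r hrpos hTE)
end

section
/- Let E, T ⊆ [0,∞). If E ⪯ T and T ⪯ E, then the sets of porosity numbers at 0 of E and T coincide: P(E) = P(T). -/
open Filter Topology

/-- `lam E h` : the length of the largest open subinterval of `(0, h)` containing no point
of `E`. -/
noncomputable def lam (E : Set ℝ) (h : ℝ) : ℝ :=
  sSup {l : ℝ | ∃ a b : ℝ, 0 ≤ a ∧ a ≤ b ∧ b ≤ h ∧ Set.Ioo a b ∩ E = ∅ ∧ l = b - a}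

/-- The set of porosity numbers of `E` at `0`. -/
def porosityNumbers (E : Set ℝ) : Set ℝ :=
  {p : ℝ | ∃ h : ℕ → ℝ, (∀ k, 0 < h k) ∧ Tendsto h atTop (nhds 0) ∧
    Tendsto (fun k => lam E (h k) / h k) atTop (nhds p)}

lemma zero_mem_lamSet {E : Set ℝ} {h : ℝ} (hh : 0 ≤ h) :
    (0:ℝ) ∈ {l : ℝ | ∃ a b : ℝ, 0 ≤ a ∧ a ≤ b ∧ b ≤ h ∧ Set.Ioo a b ∩ E = ∅ ∧ l = b - a} :=
  ⟨0, 0, le_refl 0, le_refl 0, hh, by simp, by ring⟩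

lemma lamSet_bdd {E : Set ℝ} {h : ℝ} :
    BddAbove {l : ℝ | ∃ a b : ℝ, 0 ≤ a ∧ a ≤ b ∧ b ≤ h ∧ Set.Ioo a b ∩ E = ∅ ∧ l = b - a} := by
  refine ⟨h, fun l hl => ?_⟩
  obtain ⟨a, b, ha, hab, hbh, -, hl⟩ := hl
  subst hl; linarith

lemma lam_nonneg {E : Set ℝ} {h : ℝ} (hh : 0 ≤ h) : 0 ≤ lam E h :=
  le_csSup lamSet_bdd (zero_mem_lamSet hh)

lemma prec_approx {T E : Set ℝ} (hTE : Prec T E) {ε : ℝ} (hε : 0 < ε) (hε1 : ε < 1) :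
    ∃ δ > 0, ∀ t ∈ T, 0 < t → t < δ →
      ∃ e ∈ E, t / (1 + ε) < e ∧ e < t / (1 - ε) := by
  by_contra hc
  push_neg at hc
  have H : ∀ n : ℕ, ∃ x, x ∈ T ∧ 0 < x ∧ x < 1 / (n + 1) ∧
      ∀ e ∈ E, x / (1 + ε) < e → x / (1 - ε) ≤ e := by
    intro n
    obtain ⟨x, hxT, hx0, hxδ, hx⟩ := hc (1 / (n + 1)) (by positivity)
    exact ⟨x, hxT, hx0, hxδ, hx⟩
  choose t htT ht0 htlt htbad using H
  have htmem : ∀ n, t n ∈ T \ {0} := fun n => ⟨htT n, ne_of_gt (ht0 n)⟩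
  have htend : Tendsto t atTop (nhds 0) := by
    apply squeeze_zero (fun n => (ht0 n).le) (fun n => (htlt n).le)
    exact tendsto_one_div_add_atTop_nhds_zero_nat
  obtain ⟨e, heE, hre⟩ := hTE t htmem htend
  obtain ⟨N, hN⟩ := (Metric.tendsto_atTop.mp hre) ε hε
  have hd := hN N le_rfl
  rw [Real.dist_eq, abs_lt] at hd
  have h1 : t N / e N < 1 + ε := by linarith
  have h2 : 1 - ε < t N / e N := by linarith
  have heN : 0 < e N := by
    rcases lt_trichotomy (e N) 0 with h | h | h
    · exfalso
      have : t N / e N < 0 := div_neg_of_pos_of_neg (ht0 N) h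
      linarith
    · exact absurd h (heE N).2
    · exact h
  have hlo : t N / (1 + ε) < e N := by
    rw [div_lt_iff₀ (by linarith)]
    have := (div_lt_iff₀ heN).mp h1
    linarith
  have hhi : e N < t N / (1 - ε) := by
    rw [lt_div_iff₀ (by linarith)]
    have := (lt_div_iff₀ heN).mp h2
    linarith
  exact absurd (htbad N (e N) (heE N).1 hlo) (not_le.mpr hhi)

lemma lam_ge_aux {E T : Set ℝ} {ε δ h : ℝ} (hε : 0 < ε) (hε1 : ε < 1)
    (hδ : ∀ t ∈ T, 0 < t → t < δ → ∃ e ∈ E, t / (1 + ε) < e ∧ e < t / (1 - ε))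
    (hh : 0 < h) (hhδ : h < δ) :
    lam E h - 2 * ε * h ≤ lam T h := by
  have key : lam E h ≤ lam T h + 2 * ε * h := by
    apply csSup_le ⟨0, zero_mem_lamSet hh.le⟩
    rintro l ⟨a, b, ha, hab, hbh, hgap, rfl⟩
    rcases le_or_gt (b - a) (2 * ε * h) with hcase | hcase
    · have := lam_nonneg (E := T) hh.le
      linarith
    · have hb0 : 0 ≤ b := le_trans ha hab
      have hmem : (b * (1 - ε) - a * (1 + ε)) ∈
          {l : ℝ | ∃ a' b' : ℝ, 0 ≤ a' ∧ a' ≤ b' ∧ b' ≤ h ∧ Set.Ioo a' b' ∩ T = ∅ ∧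
            l = b' - a'} := by
        refine ⟨a * (1 + ε), b * (1 - ε), by positivity, by nlinarith, by nlinarith, ?_, by ring⟩
        rw [Set.eq_empty_iff_forall_notMem]
        rintro x ⟨⟨hx1, hx2⟩, hxT⟩
        have hx0 : 0 < x := lt_of_le_of_lt (by positivity) hx1
        have hxδ : x < δ := by nlinarith
        obtain ⟨e', he'E, he'1, he'2⟩ := hδ x hxT hx0 hxδ
        have he1 : x < e' * (1 + ε) := by
          have := (div_lt_iff₀ (by linarith : (0:ℝ) < 1 + ε)).mp he'1
          linarith
        have he2 : e' * (1 - ε) < x := by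
          have := (lt_div_iff₀ (by linarith : (0:ℝ) < 1 - ε)).mp he'2
          linarith
        have hea : a < e' := by nlinarith
        have heb : e' < b := by nlinarith
        have : e' ∈ Set.Ioo a b ∩ E := ⟨⟨hea, heb⟩, he'E⟩
        rw [hgap] at this
        exact this
      have hle : b * (1 - ε) - a * (1 + ε) ≤ lam T h := le_csSup lamSet_bdd hmem
      nlinarith
  linarith

lemma lam_diff_small {E T : Set ℝ} (hET : Prec E T) (hTE : Prec T E)
    {ε : ℝ} (hε : 0 < ε) (hε1 : ε < 1) :
    ∃ δ > 0, ∀ h : ℝ, 0 < h → h < δ → |lam E h / h - lam T h / h| ≤ 2 * ε := by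
  obtain ⟨δ1, hδ1, H1⟩ := prec_approx hTE hε hε1
  obtain ⟨δ2, hδ2, H2⟩ := prec_approx hET hε hε1
  refine ⟨min δ1 δ2, lt_min hδ1 hδ2, fun h hh hhδ => ?_⟩
  have h1 := lam_ge_aux hε hε1 H1 hh (lt_of_lt_of_le hhδ (min_le_left _ _))
  have h2 := lam_ge_aux hε hε1 H2 hh (lt_of_lt_of_le hhδ (min_le_right _ _))
  rw [div_sub_div_same, abs_div, abs_of_pos hh, div_le_iff₀ hh, abs_le]
  constructor <;> nlinarith

lemma por_subset {E T : Set ℝ} (hET : Prec E T) (hTE : Prec T E) :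
    porosityNumbers E ⊆ porosityNumbers T := by
  rintro p ⟨h, hpos, h0, hp⟩
  refine ⟨h, hpos, h0, ?_⟩
  have hdiff : Tendsto (fun k => lam E (h k) / h k - lam T (h k) / h k) atTop (nhds 0) := by
    rw [NormedAddCommGroup.tendsto_nhds_zero]
    intro ε hε
    have hε'0 : (0:ℝ) < min (ε / 3) (1 / 2) := lt_min (by linarith) (by norm_num)
    have hε'1 : min (ε / 3) (1 / 2) < 1 := lt_of_le_of_lt (min_le_right _ _) (by norm_num)
    obtain ⟨δ, hδ, Hδ⟩ := lam_diff_small hET hTE hε'0 hε'1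
    have hev : ∀ᶠ k in atTop, h k < δ := h0.eventually (Filter.Tendsto.eventually_lt_const hδ tendsto_id)
    filter_upwards [hev] with k hk
    have := Hδ (h k) (hpos k) hk
    have h3 : 2 * min (ε / 3) (1 / 2) ≤ 2 * (ε / 3) := by
      have := min_le_left (ε / 3) (1/2 : ℝ)
      linarith
    calc ‖lam E (h k) / h k - lam T (h k) / h k‖
        = |lam E (h k) / h k - lam T (h k) / h k| := rfl
      _ ≤ 2 * min (ε / 3) (1 / 2) := this
      _ < ε := by linarith
  have := hp.sub hdiff
  simp only [sub_zero] at this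
  convert this using 2 with k
  ring

theorem porosityNumbers_eq_of_prec
    (E T : Set ℝ) (hE : E ⊆ Set.Ici 0) (hT : T ⊆ Set.Ici 0)
    (hET : Prec E T) (hTE : Prec T E) :
    porosityNumbers E = porosityNumbers T := by
  exact Set.Subset.antisymm (por_subset hET hTE) (por_subset hTE hET)
end

section
/- Let E = {n_1, n_2, ...} ⊆ ℕ with n_k < n_{k+1} for every k, and let μ : ℕ → (0,∞) be strictly decreasing with μ(n) → 0. Then the upper porosity of E at infinity w.r.t. μ satisfies p̄_μ(E) = 1 − liminf_{k→∞} μ(n_k)/μ(n_{k−1}). -/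
open Filter Topology

/-- `lamMu μ E n`: the analogue of the largest-hole length at infinity, i.e. the supremum
of `μ a - μ b` over `n ≤ a < b` such that no element of `E` lies strictly between `a` and `b`. -/
noncomputable def lamMu (μ : ℕ → ℝ) (E : Set ℕ) (n : ℕ) : ℝ :=
  sSup {d : ℝ | ∃ a b : ℕ, n ≤ a ∧ a < b ∧ (∀ m : ℕ, a < m → m < b → m ∉ E) ∧ d = μ a - μ b}

/-- The upper porosity of `E` at infinity w.r.t. the scaling function `μ`. -/
noncomputable def upperPorosityInf (μ : ℕ → ℝ) (E : Set ℕ) : ℝ :=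
  Filter.limsup (fun n => lamMu μ E n / μ n) Filter.atTop

/-- The lower porosity of `E` at infinity w.r.t. the scaling function `μ`. -/
noncomputable def lowerPorosityInf (μ : ℕ → ℝ) (E : Set ℕ) : ℝ :=
  Filter.liminf (fun n => lamMu μ E n / μ n) Filter.atTop

/-- The set of porosity numbers of `E` at infinity w.r.t. `μ`. -/
def porosityNumbersInf (μ : ℕ → ℝ) (E : Set ℕ) : Set ℝ :=
  {p : ℝ | ∃ n : ℕ → ℕ, StrictMono n ∧
    Tendsto (fun k => lamMu μ E (n k) / μ (n k)) atTop (nhds p)}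

theorem upperPorosityInf_eq
    (μ : ℕ → ℝ) (hμanti : StrictAnti μ) (hμpos : ∀ n, 0 < μ n)
    (hμ0 : Tendsto μ atTop (nhds 0))
    (nseq : ℕ → ℕ) (hmono : StrictMono nseq) :
    upperPorosityInf μ (Set.range nseq) =
      1 - Filter.liminf (fun k => μ (nseq (k + 1)) / μ (nseq k)) Filter.atTop := by
  classical
  set E := Set.range nseq with hE
  set r : ℕ → ℝ := fun k => μ (nseq (k + 1)) / μ (nseq k) with hr
  set L : ℝ := Filter.liminf r Filter.atTop with hLdef
  set f : ℕ → ℝ := fun n => lamMu μ E n / μ n with hf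
  set S : ℕ → Set ℝ := fun n =>
    {d : ℝ | ∃ a b : ℕ, n ≤ a ∧ a < b ∧ (∀ m : ℕ, a < m → m < b → m ∉ E) ∧ d = μ a - μ b}
    with hS
  have hlam : ∀ n, lamMu μ E n = sSup (S n) := fun n => rfl
  have hbdd : ∀ n, BddAbove (S n) := by
    intro n
    refine ⟨μ n, ?_⟩
    rintro d ⟨a, b, hna, hab, -, rfl⟩
    have h1 := hμpos b
    have h2 := hμanti.antitone hna
    linarith
  have hneS : ∀ n, (μ n - μ (n + 1)) ∈ S n := by
    intro n
    exact ⟨n, n + 1, le_refl n, Nat.lt_succ_self n, fun m h1 h2 => absurd h1 (by omega), rfl⟩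
  have hlam_le : ∀ n, lamMu μ E n ≤ μ n := by
    intro n
    rw [hlam]
    refine csSup_le ⟨_, hneS n⟩ ?_
    rintro d ⟨a, b, hna, hab, -, rfl⟩
    have h1 := hμpos b
    have h2 := hμanti.antitone hna
    linarith
  have hlam_nonneg : ∀ n, 0 ≤ lamMu μ E n := by
    intro n
    have := le_csSup (hbdd n) (hneS n)
    have := hμanti (Nat.lt_succ_self n)
    rw [hlam]
    linarith
  have hf_nonneg : ∀ n, 0 ≤ f n := fun n => div_nonneg (hlam_nonneg n) (hμpos n).le
  have hf_le_one : ∀ n, f n ≤ 1 :=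
    fun n => (div_le_one (hμpos n)).2 (hlam_le n)
  have hrpos : ∀ k, 0 < r k := fun k => div_pos (hμpos _) (hμpos _)
  have hrlt1 : ∀ k, r k < 1 :=
    fun k => (div_lt_one (hμpos _)).2 (hμanti (hmono (Nat.lt_succ_self k)))
  have hgap : ∀ k m, nseq k < m → m < nseq (k + 1) → m ∉ E := by
    rintro k m h1 h2 ⟨j, rfl⟩
    have hj1 : k < j := hmono.lt_iff_lt.mp h1
    have hj2 : j < k + 1 := hmono.lt_iff_lt.mp h2
    omega
  -- boundedness side conditions
  have hfb : Filter.IsBoundedUnder (· ≤ ·) Filter.atTop f :=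
    Filter.isBoundedUnder_of ⟨1, hf_le_one⟩
  have hfcob : Filter.IsCoboundedUnder (· ≤ ·) Filter.atTop f :=
    Filter.IsBoundedUnder.isCoboundedUnder_le (Filter.isBoundedUnder_of ⟨0, hf_nonneg⟩)
  have hrb : Filter.IsBoundedUnder (· ≥ ·) Filter.atTop r :=
    Filter.isBoundedUnder_of ⟨0, fun k => (hrpos k).le⟩
  have hrcob : Filter.IsCoboundedUnder (· ≥ ·) Filter.atTop r :=
    Filter.IsBoundedUnder.isCoboundedUnder_ge (Filter.isBoundedUnder_of ⟨1, fun k => (hrlt1 k).le⟩)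
  have key1 : ∀ k, 1 - r k ≤ f (nseq k) := by
    intro k
    have hmem : (μ (nseq k) - μ (nseq (k + 1))) ∈ S (nseq k) :=
      ⟨nseq k, nseq (k + 1), le_refl _, hmono (Nat.lt_succ_self k), hgap k, rfl⟩
    have hle : μ (nseq k) - μ (nseq (k + 1)) ≤ lamMu μ E (nseq k) := by
      rw [hlam]; exact le_csSup (hbdd _) hmem
    have hp := hμpos (nseq k)
    have heq : 1 - r k = (μ (nseq k) - μ (nseq (k + 1))) / μ (nseq k) := by
      show 1 - μ (nseq (k + 1)) / μ (nseq k) = _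
      rw [sub_div, div_self hp.ne']
    rw [heq]
    show _ ≤ lamMu μ E (nseq k) / μ (nseq k)
    gcongr
  show Filter.limsup f Filter.atTop = 1 - L
  apply le_antisymm
  · refine le_of_forall_pos_le_add fun ε hε => ?_
    have hev : ∀ᶠ k in Filter.atTop, L - ε < r k :=
      Filter.eventually_lt_of_lt_liminf (by linarith) hrb
    obtain ⟨K, hK⟩ := Filter.eventually_atTop.mp hev
    have hub : ∀ n, nseq K < n → f n ≤ 1 - L + ε := by
      intro n hn
      have hlamub : lamMu μ E n ≤ μ n * (1 - L + ε) := by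
        rw [hlam]
        refine csSup_le ⟨_, hneS n⟩ ?_
        rintro d ⟨a, b, hna, hab, hgapE, rfl⟩
        have hKa : nseq K < a := lt_of_lt_of_le hn hna
        have hex : ∃ j, a < nseq (j + 1) :=
          ⟨a, lt_of_lt_of_le (Nat.lt_succ_self a) (hmono.le_apply)⟩
        set j := Nat.find hex with hj
        have hja : a < nseq (j + 1) := Nat.find_spec hex
        have hjl : nseq j ≤ a := by
          rcases Nat.eq_zero_or_pos j with h0 | h0
          · rw [h0]
            exact le_trans (hmono.monotone (Nat.zero_le K)) hKa.le
          · have hmin := Nat.find_min hex (m := j - 1) (by omega)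
            have : nseq (j - 1 + 1) ≤ a := not_lt.mp hmin
            rwa [Nat.sub_add_cancel h0] at this
        have hjK : K ≤ j := by
          have : nseq K < nseq (j + 1) := lt_trans hKa hja
          have := hmono.lt_iff_lt.mp this
          omega
        have hbj : b ≤ nseq (j + 1) := by
          by_contra hb
          push_neg at hb
          exact hgapE (nseq (j + 1)) hja hb ⟨j + 1, rfl⟩
        have hrj : L - ε < r j := hK j hjK
        -- abbreviations
        have hA : μ a ≤ μ n := hμanti.antitone hna
        have hAP : μ a ≤ μ (nseq j) := hμanti.antitone hjl
        have hQA : μ (nseq (j + 1)) < μ a := hμanti hja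
        have hQB : μ (nseq (j + 1)) ≤ μ b := hμanti.antitone hbj
        have hPpos := hμpos (nseq j)
        have hQpos := hμpos (nseq (j + 1))
        have hNpos := hμpos n
        have hApos := hμpos a
        have h1 : (μ a - μ (nseq (j + 1))) * μ (nseq j) ≤
            μ n * (μ (nseq j) - μ (nseq (j + 1))) := by
          nlinarith [mul_nonneg (sub_nonneg.2 hA) (sub_nonneg.2 (le_trans hQA.le hAP)),
            mul_nonneg (sub_nonneg.2 hAP) hQpos.le]
        have h2 : μ n * (μ (nseq j) - μ (nseq (j + 1))) = μ n * (1 - r j) * μ (nseq j) := by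
          rw [hr]
          field_simp
        have h3 : μ a - μ (nseq (j + 1)) ≤ μ n * (1 - r j) :=
          le_of_mul_le_mul_right (h1.trans_eq h2) hPpos
        have h4 : μ n * (1 - r j) ≤ μ n * (1 - L + ε) := by
          have : 1 - r j ≤ 1 - L + ε := by linarith
          exact mul_le_mul_of_nonneg_left this hNpos.le
        linarith
      rw [hf]
      rw [div_le_iff₀ (hμpos n)]
      linarith [hlamub]
    have hevf : ∀ᶠ n in Filter.atTop, f n ≤ 1 - L + ε :=
      Filter.eventually_atTop.mpr ⟨nseq K + 1, fun n hn => hub n (by omega)⟩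
    exact Filter.limsup_le_of_le hfcob hevf
  · refine Filter.le_limsup_of_le hfb fun b hb => ?_
    obtain ⟨N, hN⟩ := Filter.eventually_atTop.mp hb
    have hev : ∀ᶠ k in Filter.atTop, 1 - r k ≤ b := by
      refine Filter.eventually_atTop.mpr ⟨N, fun k hk => ?_⟩
      have : N ≤ nseq k := le_trans hk hmono.le_apply
      exact (key1 k).trans (hN _ this)
    have hls : Filter.limsup (fun k => 1 - r k) Filter.atTop ≤ b :=
      Filter.limsup_le_of_le
        (Filter.IsBoundedUnder.isCoboundedUnder_le
          (Filter.isBoundedUnder_of ⟨0, fun k => by linarith [hrlt1 k]⟩)) hev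
    rwa [_root_.limsup_const_sub Filter.atTop r 1 hrcob hrb] at hls
end

section
/- Let E = {n_1, n_2, ...} be an infinite subset of ℕ with n_k < n_{k+1}, and let μ be a scaling function. Then p̄_μ(E) = 0 if and only if lim_{k→∞} μ(n_{k+1})/μ(n_k) = 1. -/
open Filter Topology

section Aux

variable {μ : ℕ → ℝ} {E : Set ℕ}

lemma gap_mem (n : ℕ) :
    (μ n - μ (n + 1)) ∈
      {d : ℝ | ∃ a b : ℕ, n ≤ a ∧ a < b ∧ (∀ m : ℕ, a < m → m < b → m ∉ E) ∧ d = μ a - μ b} :=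
  ⟨n, n + 1, le_refl n, Nat.lt_succ_self n, fun m h1 h2 => absurd h1 (by omega), rfl⟩

lemma gap_bddAbove (hμanti : StrictAnti μ) (hμpos : ∀ n, 0 < μ n) (n : ℕ) :
    BddAbove {d : ℝ | ∃ a b : ℕ, n ≤ a ∧ a < b ∧ (∀ m : ℕ, a < m → m < b → m ∉ E) ∧
      d = μ a - μ b} := by
  refine ⟨μ n, fun d hd => ?_⟩
  obtain ⟨a, b, hna, hab, _, rfl⟩ := hd
  have h1 : μ a ≤ μ n := hμanti.antitone hna
  have h2 : 0 < μ b := hμpos b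
  linarith

lemma lamMu_le (hμanti : StrictAnti μ) (hμpos : ∀ n, 0 < μ n) (n : ℕ) :
    lamMu μ E n ≤ μ n := by
  refine csSup_le ⟨_, gap_mem n⟩ fun d hd => ?_
  obtain ⟨a, b, hna, hab, _, rfl⟩ := hd
  have h1 : μ a ≤ μ n := hμanti.antitone hna
  have h2 : 0 < μ b := hμpos b
  linarith

lemma lamMu_nonneg (hμanti : StrictAnti μ) (hμpos : ∀ n, 0 < μ n) (n : ℕ) :
    0 ≤ lamMu μ E n := by
  have h := le_csSup (gap_bddAbove hμanti hμpos n) (gap_mem (E := E) n)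
  have := hμanti (Nat.lt_succ_self n)
  refine le_trans ?_ h
  linarith

end Aux

theorem nonporous_at_infinity_iff
    (μ : ℕ → ℝ) (hμanti : StrictAnti μ) (hμpos : ∀ n, 0 < μ n)
    (hμ0 : Tendsto μ atTop (nhds 0))
    (nseq : ℕ → ℕ) (hmono : StrictMono nseq) :
    upperPorosityInf μ (Set.range nseq) = 0 ↔
      Tendsto (fun k => μ (nseq (k + 1)) / μ (nseq k)) atTop (nhds 1) := by
  set E : Set ℕ := Set.range nseq with hE
  set f : ℕ → ℝ := fun n => lamMu μ E n / μ n with hf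
  have hf0 : ∀ n, 0 ≤ f n := fun n =>
    div_nonneg (lamMu_nonneg hμanti hμpos n) (hμpos n).le
  have hf1 : ∀ n, f n ≤ 1 := fun n =>
    (div_le_one (hμpos n)).2 (lamMu_le hμanti hμpos n)
  have hbdd : IsBoundedUnder (· ≤ ·) atTop f := isBoundedUnder_of ⟨1, hf1⟩
  have hbdd' : IsBoundedUnder (· ≥ ·) atTop f := isBoundedUnder_of ⟨0, hf0⟩
  constructor
  · -- limsup = 0 → ratio → 1
    intro h
    have hliminf : liminf f atTop = 0 := by
      refine le_antisymm ?_ ?_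
      · calc liminf f atTop ≤ limsup f atTop := liminf_le_limsup hbdd hbdd'
          _ = 0 := h
      · exact le_liminf_of_le hbdd.isCoboundedUnder_ge (Eventually.of_forall hf0)
    have htend : Tendsto f atTop (𝓝 0) :=
      tendsto_of_liminf_eq_limsup hliminf h hbdd hbdd'
    have hsub : Tendsto (fun k => f (nseq k)) atTop (𝓝 0) :=
      htend.comp hmono.tendsto_atTop
    -- squeeze: 0 ≤ 1 - ratio k ≤ f (nseq k)
    have hkey : ∀ k, 1 - μ (nseq (k + 1)) / μ (nseq k) ≤ f (nseq k) := by
      intro k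
      have hmem : (μ (nseq k) - μ (nseq (k + 1))) ∈
          {d : ℝ | ∃ a b : ℕ, nseq k ≤ a ∧ a < b ∧ (∀ m : ℕ, a < m → m < b → m ∉ E) ∧
            d = μ a - μ b} := by
        refine ⟨nseq k, nseq (k + 1), le_refl _, hmono (Nat.lt_succ_self k), ?_, rfl⟩
        intro m h1 h2 hm
        obtain ⟨j, rfl⟩ := hm
        have : k < j := hmono.lt_iff_lt.1 h1
        have : j < k + 1 := hmono.lt_iff_lt.1 h2
        omega
      have hle : μ (nseq k) - μ (nseq (k + 1)) ≤ lamMu μ E (nseq k) :=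
        le_csSup (gap_bddAbove hμanti hμpos _) hmem
      have hpos := hμpos (nseq k)
      have heq : 1 - μ (nseq (k + 1)) / μ (nseq k)
          = (μ (nseq k) - μ (nseq (k + 1))) / μ (nseq k) := by
        field_simp
      rw [heq]
      show _ ≤ lamMu μ E (nseq k) / μ (nseq k)
      gcongr
    have hsq : Tendsto (fun k => 1 - μ (nseq (k + 1)) / μ (nseq k)) atTop (𝓝 0) := by
      refine tendsto_of_tendsto_of_tendsto_of_le_of_le tendsto_const_nhds hsub ?_ hkey
      intro k
      have h1 : μ (nseq (k + 1)) < μ (nseq k) := hμanti (hmono (Nat.lt_succ_self k))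
      have h2 := hμpos (nseq k)
      have : μ (nseq (k + 1)) / μ (nseq k) ≤ 1 := (div_le_one h2).2 h1.le
      linarith
    have hfin : Tendsto (fun k => 1 - (1 - μ (nseq (k + 1)) / μ (nseq k))) atTop (𝓝 (1 - 0)) :=
      tendsto_const_nhds.sub hsq
    simpa using hfin
  · -- ratio → 1 → limsup = 0
    intro h
    have htend : Tendsto f atTop (𝓝 0) := by
      rw [Metric.tendsto_atTop]
      intro ε hε
      -- get K such that for j ≥ K, 1 - ε/2 < ratio j
      have h2 : ∀ᶠ j in atTop, 1 - ε / 2 < μ (nseq (j + 1)) / μ (nseq j) := by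
        have := Metric.tendsto_atTop.1 h (ε / 2) (by linarith)
        obtain ⟨K, hK⟩ := this
        refine eventually_atTop.2 ⟨K, fun j hj => ?_⟩
        have := hK j hj
        rw [Real.dist_eq, abs_lt] at this
        linarith [this.1]
      obtain ⟨K, hK⟩ := eventually_atTop.1 h2
      refine ⟨nseq K, fun n hn => ?_⟩
      have hμn := hμpos n
      have hbound : lamMu μ E n ≤ ε / 2 * μ n := by
        refine csSup_le ⟨_, gap_mem n⟩ fun d hd => ?_
        obtain ⟨a, b, hna, hab, hhole, rfl⟩ := hd
        -- find j ≥ K with nseq j ≤ a < nseq (j+1)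
        have hP : ∃ m, a < nseq m := ⟨a + 1, lt_of_lt_of_le (Nat.lt_succ_self a)
          (hmono.le_apply)⟩
        classical
        have hma : a < nseq (Nat.find hP) := Nat.find_spec hP
        have hmK : K < Nat.find hP := by
          by_contra hc
          push_neg at hc
          have h1 : nseq (Nat.find hP) ≤ nseq K := hmono.monotone hc
          have h2 : nseq (Nat.find hP) ≤ a := le_trans h1 (le_trans hn hna)
          omega
        obtain ⟨j, hj⟩ : ∃ j, Nat.find hP = j + 1 := ⟨Nat.find hP - 1, by omega⟩
        rw [hj] at hma
        have hja : nseq j ≤ a := by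
          have := Nat.find_min hP (m := j) (by omega)
          omega
        have hjK : K ≤ j := by omega
        have hratio : 1 - ε / 2 < μ (nseq (j + 1)) / μ (nseq j) := hK j hjK
        have hjpos := hμpos (nseq j)
        have hj1pos := hμpos (nseq (j + 1))
        have hratio' : (1 - ε / 2) * μ (nseq j) < μ (nseq (j + 1)) := by
          rw [lt_div_iff₀ hjpos] at hratio
          linarith
        -- b ≤ nseq (j+1)
        have hb : b ≤ nseq (j + 1) := by
          by_contra hc
          push_neg at hc
          exact hhole (nseq (j + 1)) hma hc ⟨j + 1, rfl⟩
        have hμb : μ (nseq (j + 1)) ≤ μ b := hμanti.antitone hb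
        have hμa1 : μ a ≤ μ n := hμanti.antitone hna
        have hμa2 : μ a ≤ μ (nseq j) := hμanti.antitone hja
        rcases le_total (μ (nseq j)) (μ n) with hcase | hcase
        · nlinarith
        · nlinarith
      have hfle : f n ≤ ε / 2 := by
        rw [hf, div_le_iff₀ hμn]
        simpa [mul_comm] using hbound
      rw [Real.dist_eq, sub_zero, abs_of_nonneg (hf0 n)]
      linarith
    exact htend.limsup_eq
end

section
/- Let μ₁, μ₂ : ℕ → (0,∞) be scaling functions such that lim_{n,m→∞} (μ₁(n)μ₂(m))/(μ₂(n)μ₁(m)) = 1. Then for every E ⊆ ℕ the sets of porosity numbers at infinity coincide: P_{μ₁}(E) = P_{μ₂}(E). -/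
open Filter Topology

lemma lamMu_set_nonempty (μ : ℕ → ℝ) (E : Set ℕ) (n : ℕ) :
    {d : ℝ | ∃ a b : ℕ, n ≤ a ∧ a < b ∧ (∀ m : ℕ, a < m → m < b → m ∉ E) ∧
      d = μ a - μ b}.Nonempty :=
  ⟨μ n - μ (n + 1), n, n + 1, le_refl n, Nat.lt_succ_self n,
    fun m h1 h2 => absurd h2 (by omega), rfl⟩

lemma lamMu_set_bddAbove (μ : ℕ → ℝ) (hanti : StrictAnti μ) (hpos : ∀ k, 0 < μ k)
    (E : Set ℕ) (n : ℕ) :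
    BddAbove {d : ℝ | ∃ a b : ℕ, n ≤ a ∧ a < b ∧ (∀ m : ℕ, a < m → m < b → m ∉ E) ∧
      d = μ a - μ b} := by
  refine ⟨μ n, ?_⟩
  rintro d ⟨a, b, ha, hab, _, rfl⟩
  have h1 : μ a ≤ μ n := hanti.antitone ha
  have h2 : 0 < μ b := hpos b
  linarith

/-- One-sided comparison of normalized gap suprema. -/
lemma lamMu_div_le (μ₁ μ₂ : ℕ → ℝ)
    (h₁anti : StrictAnti μ₁) (h₁pos : ∀ k, 0 < μ₁ k)
    (h₂anti : StrictAnti μ₂) (h₂pos : ∀ k, 0 < μ₂ k)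
    (ε : ℝ) (hε : 0 < ε) (N : ℕ)
    (hN : ∀ n ≥ N, ∀ m ≥ N, |μ₁ n * μ₂ m / (μ₂ n * μ₁ m) - 1| < ε)
    (E : Set ℕ) (n : ℕ) (hn : N ≤ n) :
    lamMu μ₂ E n / μ₂ n ≤ lamMu μ₁ E n / μ₁ n + 2 * ε := by
  rw [div_le_iff₀ (h₂pos n)]
  apply csSup_le (lamMu_set_nonempty μ₂ E n)
  rintro d ⟨a, b, ha, hab, hE, rfl⟩
  have hL : μ₁ a - μ₁ b ≤ lamMu μ₁ E n :=
    le_csSup (lamMu_set_bddAbove μ₁ h₁anti h₁pos E n) ⟨a, b, ha, hab, hE, rfl⟩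
  have haN : N ≤ a := le_trans hn ha
  have hbN : N ≤ b := le_trans haN (le_of_lt hab)
  have hra := abs_lt.1 (hN n hn a haN)
  have hrb := abs_lt.1 (hN n hn b hbN)
  have hp2a : 0 < μ₂ n * μ₁ a := mul_pos (h₂pos n) (h₁pos a)
  have hp2b : 0 < μ₂ n * μ₁ b := mul_pos (h₂pos n) (h₁pos b)
  -- multiplied-out forms
  have hA : μ₁ n * μ₂ a < (1 + ε) * (μ₂ n * μ₁ a) := by
    have h' : μ₁ n * μ₂ a / (μ₂ n * μ₁ a) < 1 + ε := by linarith [hra.2]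
    rw [div_lt_iff₀ hp2a] at h'
    linarith
  have hB : (1 - ε) * (μ₂ n * μ₁ b) < μ₁ n * μ₂ b := by
    have h' : 1 - ε < μ₁ n * μ₂ b / (μ₂ n * μ₁ b) := by linarith [hrb.1]
    rw [lt_div_iff₀ hp2b] at h'
    linarith
  have h1a : μ₁ a ≤ μ₁ n := h₁anti.antitone ha
  have h1b : μ₁ b ≤ μ₁ n := h₁anti.antitone (le_trans ha (le_of_lt hab))
  have h1bpos : 0 < μ₁ b := h₁pos b
  have h1apos : 0 < μ₁ a := h₁pos a
  have h1npos : 0 < μ₁ n := h₁pos n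
  have h2npos : 0 < μ₂ n := h₂pos n
  have key : μ₂ a - μ₂ b ≤ (lamMu μ₁ E n + 2 * ε * μ₁ n) * μ₂ n / μ₁ n := by
    rw [le_div_iff₀ h1npos]
    nlinarith [mul_le_mul_of_nonneg_left hL (le_of_lt h2npos),
      mul_le_mul_of_nonneg_left h1a (le_of_lt (mul_pos hε h2npos)),
      mul_le_mul_of_nonneg_left h1b (le_of_lt (mul_pos hε h2npos))]
  have heq : (lamMu μ₁ E n + 2 * ε * μ₁ n) * μ₂ n / μ₁ n
      = (lamMu μ₁ E n / μ₁ n + 2 * ε) * μ₂ n := by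
    field_simp
  linarith [heq ▸ key]

/-- The double-limit hypothesis is symmetric. -/
lemma hlim_symm (μ₁ μ₂ : ℕ → ℝ) (h₁pos : ∀ k, 0 < μ₁ k) (h₂pos : ∀ k, 0 < μ₂ k)
    (hlim : ∀ ε > (0 : ℝ), ∃ N : ℕ, ∀ n ≥ N, ∀ m ≥ N,
      |μ₁ n * μ₂ m / (μ₂ n * μ₁ m) - 1| < ε) :
    ∀ ε > (0 : ℝ), ∃ N : ℕ, ∀ n ≥ N, ∀ m ≥ N,
      |μ₂ n * μ₁ m / (μ₁ n * μ₂ m) - 1| < ε := by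
  intro ε hε
  obtain ⟨N, hN⟩ := hlim (min (ε / 2) (1 / 2)) (by positivity)
  refine ⟨N, fun n hn m hm => ?_⟩
  have h := abs_lt.1 (hN n hn m hm)
  set r : ℝ := μ₁ n * μ₂ m / (μ₂ n * μ₁ m) with hr
  have hmin1 : min (ε / 2) (1 / 2) ≤ ε / 2 := min_le_left _ _
  have hmin2 : min (ε / 2) (1 / 2) ≤ 1 / 2 := min_le_right _ _
  have hrpos : (1 : ℝ) / 2 < r := by linarith [h.1]
  have hrne : r ≠ 0 := by linarith
  have hinv : μ₂ n * μ₁ m / (μ₁ n * μ₂ m) = r⁻¹ := by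
    rw [hr, inv_div]
  rw [hinv]
  have heq : r⁻¹ - 1 = (1 - r) / r := by field_simp
  rw [heq, abs_div, abs_of_pos (by linarith : (0:ℝ) < r)]
  rw [div_lt_iff₀ (by linarith : (0:ℝ) < r)]
  have habs : |1 - r| < ε / 2 := by
    rw [abs_sub_comm]
    exact lt_of_lt_of_le (abs_lt.2 h) hmin1
  nlinarith [abs_nonneg (1 - r)]

lemma diff_tendsto (μ₁ μ₂ : ℕ → ℝ)
    (h₁anti : StrictAnti μ₁) (h₁pos : ∀ k, 0 < μ₁ k)
    (h₂anti : StrictAnti μ₂) (h₂pos : ∀ k, 0 < μ₂ k)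
    (hlim : ∀ ε > (0 : ℝ), ∃ N : ℕ, ∀ n ≥ N, ∀ m ≥ N,
      |μ₁ n * μ₂ m / (μ₂ n * μ₁ m) - 1| < ε)
    (E : Set ℕ) :
    Tendsto (fun n => lamMu μ₂ E n / μ₂ n - lamMu μ₁ E n / μ₁ n) atTop (nhds 0) := by
  rw [Metric.tendsto_atTop]
  intro ε hε
  obtain ⟨N₁, hN₁⟩ := hlim (ε / 3) (by positivity)
  obtain ⟨N₂, hN₂⟩ := hlim_symm μ₁ μ₂ h₁pos h₂pos hlim (ε / 3) (by positivity)
  refine ⟨max N₁ N₂, fun n hn => ?_⟩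
  have hn₁ : N₁ ≤ n := le_trans (le_max_left _ _) hn
  have hn₂ : N₂ ≤ n := le_trans (le_max_right _ _) hn
  have h1 := lamMu_div_le μ₁ μ₂ h₁anti h₁pos h₂anti h₂pos (ε / 3) (by positivity) N₁ hN₁ E n hn₁
  have h2 := lamMu_div_le μ₂ μ₁ h₂anti h₂pos h₁anti h₁pos (ε / 3) (by positivity) N₂ hN₂ E n hn₂
  rw [Real.dist_eq, sub_zero, abs_lt]
  constructor <;> linarith

lemma por_subset_s12 (μ₁ μ₂ : ℕ → ℝ) (E : Set ℕ)
    (h : Tendsto (fun n => lamMu μ₂ E n / μ₂ n - lamMu μ₁ E n / μ₁ n) atTop (nhds 0)) :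
    porosityNumbersInf μ₁ E ⊆ porosityNumbersInf μ₂ E := by
  rintro p ⟨nk, hmono, hp⟩
  refine ⟨nk, hmono, ?_⟩
  have hnk : Tendsto nk atTop atTop := hmono.tendsto_atTop
  have h0 : Tendsto (fun k => lamMu μ₂ E (nk k) / μ₂ (nk k) - lamMu μ₁ E (nk k) / μ₁ (nk k))
      atTop (nhds 0) := h.comp hnk
  have := h0.add hp
  simpa using this

theorem porosityNumbersInf_eq_of_double_limit
    (μ₁ μ₂ : ℕ → ℝ)
    (hμ₁anti : StrictAnti μ₁) (hμ₁pos : ∀ n, 0 < μ₁ n) (hμ₁0 : Tendsto μ₁ atTop (nhds 0))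
    (hμ₂anti : StrictAnti μ₂) (hμ₂pos : ∀ n, 0 < μ₂ n) (hμ₂0 : Tendsto μ₂ atTop (nhds 0))
    (hlim : ∀ ε > (0 : ℝ), ∃ N : ℕ, ∀ n ≥ N, ∀ m ≥ N,
      |μ₁ n * μ₂ m / (μ₂ n * μ₁ m) - 1| < ε)
    (E : Set ℕ) :
    porosityNumbersInf μ₁ E = porosityNumbersInf μ₂ E := by
  have hd := diff_tendsto μ₁ μ₂ hμ₁anti hμ₁pos hμ₂anti hμ₂pos hlim E
  have hd' : Tendsto (fun n => lamMu μ₁ E n / μ₁ n - lamMu μ₂ E n / μ₂ n) atTop (nhds 0) := by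
    have := hd.neg
    simpa using this
  exact Set.Subset.antisymm (por_subset_s12 μ₁ μ₂ E hd) (por_subset_s12 μ₂ μ₁ E hd')
end

section
/- Let μ : ℕ → (0,∞) be a scaling function that is eventually concave, i.e., (μ(n−1) + μ(n+1))/2 ≥ μ(n) for all sufficiently large n. Then p̲_μ(ℕ) = 1 − limsup_{n→∞} μ(n+1)/μ(n). -/
open Filter Topology

/-- If the successive differences of `μ` are antitone from `N` on, then for `n ≥ N`
the quantity `lamMu μ Set.univ n` is just `μ n - μ (n+1)`. -/
lemma lamMu_univ_eq (μ : ℕ → ℝ) (hμanti : StrictAnti μ) {n N : ℕ}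
    (hd : ∀ k, N ≤ k → μ (k + 1) - μ (k + 2) ≤ μ k - μ (k + 1)) (hn : N ≤ n) :
    lamMu μ Set.univ n = μ n - μ (n + 1) := by
  have hmono : ∀ a, n ≤ a → μ a - μ (a + 1) ≤ μ n - μ (n + 1) := by
    intro a ha
    induction a with
    | zero => simp_all
    | succ k ih =>
      rcases eq_or_lt_of_le ha with h | h
      · rw [← h]
      · have hk : n ≤ k := Nat.lt_succ_iff.mp h
        exact (hd k (le_trans hn hk)).trans (ih hk)
  have hmem : μ n - μ (n + 1) ∈
      {d : ℝ | ∃ a b : ℕ, n ≤ a ∧ a < b ∧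
        (∀ m : ℕ, a < m → m < b → m ∉ (Set.univ : Set ℕ)) ∧ d = μ a - μ b} :=
    ⟨n, n + 1, le_refl n, Nat.lt_succ_self n, fun m h1 h2 => absurd h2 (by omega), rfl⟩
  apply le_antisymm
  · apply Real.sSup_le
    · rintro d ⟨a, b, hna, hab, hgap, rfl⟩
      have hb : b = a + 1 := by
        by_contra h
        exact hgap (a + 1) (Nat.lt_succ_self a)
          (lt_of_le_of_ne (Nat.succ_le_of_lt hab) (fun e => h e.symm)) (Set.mem_univ _)
      rw [hb]; exact hmono a hna
    · linarith [hμanti (Nat.lt_succ_self n)]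
  · apply le_csSup _ hmem
    refine ⟨μ n - μ (n + 1), ?_⟩
    rintro d ⟨a, b, hna, hab, hgap, rfl⟩
    have hb : b = a + 1 := by
      by_contra h
      exact hgap (a + 1) (Nat.lt_succ_self a)
        (lt_of_le_of_ne (Nat.succ_le_of_lt hab) (fun e => h e.symm)) (Set.mem_univ _)
    rw [hb]; exact hmono a hna

theorem lowerPorosityInf_of_eventually_concave
    (μ : ℕ → ℝ) (hμanti : StrictAnti μ) (hμpos : ∀ n, 0 < μ n)
    (hμ0 : Tendsto μ atTop (nhds 0))
    -- μ is eventually concave: (μ(n-1) + μ(n+1))/2 ≥ μ(n) for all large n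
    (hconc : ∀ᶠ n : ℕ in atTop, μ n ≤ (μ (n - 1) + μ (n + 1)) / 2) :
    lowerPorosityInf μ Set.univ =
      1 - Filter.limsup (fun n => μ (n + 1) / μ n) Filter.atTop := by
  obtain ⟨N, hN⟩ := eventually_atTop.mp hconc
  have hd : ∀ k, N ≤ k → μ (k + 1) - μ (k + 2) ≤ μ k - μ (k + 1) := by
    intro k hk
    have := hN (k + 1) (by omega)
    simp only [Nat.add_sub_cancel] at this
    linarith
  have heq : ∀ᶠ n in atTop, lamMu μ Set.univ n / μ n = 1 - μ (n + 1) / μ n := by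
    filter_upwards [eventually_ge_atTop N] with n hn
    rw [lamMu_univ_eq μ hμanti hd hn, sub_div, div_self (hμpos n).ne']
  rw [lowerPorosityInf, liminf_congr heq]
  have hbdd : IsBoundedUnder (· ≤ ·) atTop (fun n => μ (n + 1) / μ n) :=
    isBoundedUnder_of ⟨1, fun n =>
      (div_le_one (hμpos n)).mpr (hμanti (Nat.lt_succ_self n)).le⟩
  have hcobdd : IsCoboundedUnder (· ≤ ·) atTop (fun n => μ (n + 1) / μ n) := by
    apply IsBoundedUnder.isCoboundedUnder_le
    exact isBoundedUnder_of ⟨0, fun n => (div_pos (hμpos (n + 1)) (hμpos n)).le⟩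
  have := Antitone.map_limsup_of_continuousAt (F := atTop)
    (f := fun x : ℝ => 1 - x) (fun x y h => by dsimp; linarith)
    (fun n => μ (n + 1) / μ n) (by fun_prop) hbdd hcobdd
  exact this.symm
end
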